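/- For every ordinal θ > 1, a subset S of C^ω belongs to Λ_θ if and only if there exists a family of sets (S_i)_{i∈I} forming an open union with S = ⩁_{i∈I} S_i and such that for each i there exists an ordinal θ_i with 1 ≤ θ_i < θ and S_i ∈ K_{θ_i}. -/

import Mathlib

open Set Topology

noncomputable section

def seqTop (C : Type) : TopologicalSpace (ℕ → C) :=
  @Pi.topologicalSpace ℕ (fun _ => C) (fun _ => ⊥)

def pref {C : Type} (ρ : ℕ → C) (n : ℕ) : List C :=
  (List.range n).map ρ

def OrdEven (θ : Ordinal) : Prop :=
  ∃ (lam : Ordinal) (k : ℕ), (lam = 0 ∨ Order.IsSuccLimit lam) ∧ θ = lam + 2 * (k : Ordinal)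

def HDiffSet {C : Type} (θ : Ordinal) (O : Ordinal → Set (ℕ → C)) : Set (ℕ → C) :=
  {ρ | (∃ η < θ, ρ ∈ O η) ∧ (OrdEven (sInf {η | η < θ ∧ ρ ∈ O η}) ↔ ¬ OrdEven θ)}

def Dclass (C : Type) (θ : Ordinal) : Set (Set (ℕ → C)) :=
  {S | ∃ O : Ordinal → Set (ℕ → C),
      (∀ η < θ, IsOpen[seqTop C] (O η)) ∧
      (∀ η₁ η₂, η₁ ≤ η₂ → η₂ < θ → O η₁ ⊆ O η₂) ∧
      S = HDiffSet θ O}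

def FineLambda (C : Type) : Ordinal → Set (Set (ℕ → C))
  | θ =>
    if θ = 1 then {S | IsOpen[seqTop C] S}
    else if 1 < θ then
      {S | ∃ (I : Type) (T O : I → Set (ℕ → C)) (η : I → {x : Ordinal // x < θ}),
        (∀ i, IsOpen[seqTop C] (O i)) ∧ (Pairwise fun i j => Disjoint (O i) (O j)) ∧
        (∀ i, T i ⊆ O i) ∧ S = ⋃ i, T i ∧
        ∀ i, T i ∈ FineLambda C (η i) ∨ (T i)ᶜ ∈ FineLambda C (η i)}
    else ∅
termination_by θ => θ
decreasing_by all_goals exact (η i).2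

def FineK (C : Type) (θ : Ordinal) : Set (Set (ℕ → C)) :=
  {S | Sᶜ ∈ FineLambda C θ}

/-! ### Auxiliary material -/

theorem FineLambda_eq (C : Type) (θ : Ordinal) :
    FineLambda C θ = if θ = 1 then {S | IsOpen[seqTop C] S}
    else if 1 < θ then
      {S | ∃ (I : Type) (T O : I → Set (ℕ → C)) (η : I → {x : Ordinal // x < θ}),
        (∀ i, IsOpen[seqTop C] (O i)) ∧ (Pairwise fun i j => Disjoint (O i) (O j)) ∧
        (∀ i, T i ⊆ O i) ∧ S = ⋃ i, T i ∧
        ∀ i, T i ∈ FineLambda C (η i) ∨ (T i)ᶜ ∈ FineLambda C (η i)}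
    else ∅ := by rw [FineLambda]

section Aux

variable {C : Type}

local instance instC : TopologicalSpace C := ⊥

local instance : DiscreteTopology C := ⟨rfl⟩

lemma seqTop_eq : seqTop C = Pi.topologicalSpace := rfl

lemma one_le_of_memLambda {η : Ordinal} {T : Set (ℕ → C)} (h : T ∈ FineLambda C η) :
    1 ≤ η := by
  by_contra hlt
  push_neg at hlt
  have h0 : η = 0 := Ordinal.lt_one_iff_zero.mp hlt
  subst h0
  rw [FineLambda_eq] at h
  simp [not_lt_zero] at h

lemma pref_length (ρ : ℕ → C) (n : ℕ) : (pref ρ n).length = n := by simp [pref]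

lemma pref_getElem (ρ : ℕ → C) {n k : ℕ} (hk : k < n) :
    (pref ρ n)[k]'(by simpa [pref_length] using hk) = ρ k := by
  simp [pref]

lemma pref_take (ρ : ℕ → C) {m n : ℕ} (h : m ≤ n) : (pref ρ n).take m = pref ρ m := by
  apply List.ext_getElem
  · simp [pref, h]
  · intro k h1 h2
    simp [pref]

lemma pref_eq_iff {σ ρ : ℕ → C} {n : ℕ} : pref σ n = pref ρ n ↔ ∀ k < n, σ k = ρ k := by
  constructor
  · intro h k hk
    have := congrArg (fun l : List C => l[k]?) h
    simpa [pref, hk] using this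
  · intro h
    apply List.ext_getElem
    · simp [pref]
    · intro k h1 h2
      simp only [pref_length] at h1
      rw [pref_getElem σ h1, pref_getElem ρ h1]
      exact h k h1

/-- The basic clopen cylinder of a finite word. -/
def cylSet (w : List C) : Set (ℕ → C) := {ρ | pref ρ w.length = w}

lemma mem_cylSet_pref {σ ρ : ℕ → C} {n : ℕ} :
    σ ∈ cylSet (pref ρ n) ↔ ∀ k < n, σ k = ρ k := by
  simp only [cylSet, mem_setOf_eq, pref_length]
  exact pref_eq_iff

lemma self_mem_cylSet_pref (ρ : ℕ → C) (n : ℕ) : ρ ∈ cylSet (pref ρ n) :=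
  mem_cylSet_pref.mpr fun _ _ => rfl

lemma eq_pref_of_mem_cylSet {w : List C} {ρ : ℕ → C} (h : ρ ∈ cylSet w) :
    w = pref ρ w.length := h.symm

lemma cylSet_eq_iInter (w : List C) :
    cylSet w = ⋂ k : Fin w.length, (fun ρ : ℕ → C => ρ k) ⁻¹' {w.get k} := by
  ext ρ
  simp only [cylSet, mem_setOf_eq, mem_iInter, mem_preimage, mem_singleton_iff]
  constructor
  · intro h k
    have : (pref ρ w.length)[(k : ℕ)]'(by simp [pref_length]) = w[(k : ℕ)] := by
      simp [h]
    rwa [pref_getElem ρ k.2] at this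
  · intro h
    apply List.ext_getElem
    · simp [pref_length]
    · intro k h1 h2
      rw [pref_getElem ρ (by simpa [pref_length] using h1)]
      exact h ⟨k, h2⟩

lemma isOpen_cylSet (w : List C) : IsOpen[seqTop C] (cylSet w) := by
  rw [seqTop_eq, cylSet_eq_iInter]
  exact isOpen_iInter_of_finite fun k =>
    (continuous_apply (k : ℕ)).isOpen_preimage _ (isOpen_discrete _)

lemma isClosed_cylSet (w : List C) : IsClosed[seqTop C] (cylSet w) := by
  rw [seqTop_eq, cylSet_eq_iInter]
  exact isClosed_iInter fun k =>
    (isClosed_discrete ({w.get k} : Set C)).preimage (continuous_apply (k : ℕ))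

lemma cylSet_mem_FineK_one (w : List C) : cylSet w ∈ FineK C 1 := by
  show (cylSet w)ᶜ ∈ FineLambda C 1
  rw [FineLambda_eq, if_pos rfl]
  exact (isClosed_cylSet w).isOpen_compl

lemma exists_cyl_subset {U : Set (ℕ → C)} (hU : IsOpen[seqTop C] U) {ρ : ℕ → C}
    (hρ : ρ ∈ U) : ∃ n, cylSet (pref ρ n) ⊆ U := by
  rw [seqTop_eq] at hU
  obtain ⟨I, u, hu, hsub⟩ := isOpen_pi_iff.mp hU ρ hρ
  refine ⟨I.sup id + 1, fun σ hσ => hsub ?_⟩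
  intro a ha
  have haI : a < I.sup id + 1 := Nat.lt_succ_of_le (Finset.le_sup (f := id) ha)
  rw [mem_cylSet_pref.mp hσ a haI]
  exact (hu a ha).2

/-- Every open set is a disjoint open union of clopen cylinders. -/
lemma open_decomp {U : Set (ℕ → C)} (hU : IsOpen[seqTop C] U) :
    ∃ (J : Type) (T' O' : J → Set (ℕ → C)), (∀ j, IsOpen[seqTop C] (O' j)) ∧
      (Pairwise fun a b => Disjoint (O' a) (O' b)) ∧ (∀ j, T' j ⊆ O' j) ∧
      (∀ j, O' j ⊆ U) ∧ U = ⋃ j, T' j ∧ ∀ j, T' j ∈ FineK C 1 := by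
  classical
  set J := {w : List C // cylSet w ⊆ U ∧ ∀ m < w.length, ¬ cylSet (w.take m) ⊆ U} with hJ
  have haux : ∀ w w' : List C, cylSet w ⊆ U →
      (∀ m < w'.length, ¬ cylSet (w'.take m) ⊆ U) → ∀ ρ : ℕ → C,
      ρ ∈ cylSet w → ρ ∈ cylSet w' → w.length ≤ w'.length → w = w' := by
    intro w w' hw1 hw2' ρ h h' hle
    have e : w = pref ρ w.length := eq_pref_of_mem_cylSet h
    have e' : w' = pref ρ w'.length := eq_pref_of_mem_cylSet h'
    have htake : w'.take w.length = w := by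
      rw [e', pref_take ρ hle]; exact e.symm
    rcases lt_or_eq_of_le hle with hlt | heq
    · exact absurd (show cylSet (w'.take w.length) ⊆ U by rw [htake]; exact hw1)
        (hw2' _ hlt)
    · rw [← htake, heq, List.take_length]
  refine ⟨J, fun j => cylSet j.1, fun j => cylSet j.1,
    fun j => isOpen_cylSet _, ?_, fun j => subset_rfl, fun j => j.2.1, ?_,
    fun j => cylSet_mem_FineK_one _⟩
  · intro j j' hne
    rw [Set.disjoint_left]
    intro ρ h h'
    apply hne
    rcases le_total j.1.length j'.1.length with hle | hle
    · exact Subtype.ext (haux j.1 j'.1 j.2.1 j'.2.2 ρ h h' hle)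
    · exact Subtype.ext (haux j'.1 j.1 j'.2.1 j.2.2 ρ h' h hle).symm
  · apply Subset.antisymm
    · intro ρ hρ
      have hex : ∃ n, cylSet (pref ρ n) ⊆ U := exists_cyl_subset hU hρ
      set n := Nat.find hex with hn
      refine mem_iUnion.mpr ⟨⟨pref ρ n, Nat.find_spec hex, ?_⟩, self_mem_cylSet_pref ρ n⟩
      intro m hm
      rw [pref_length] at hm
      rw [pref_take ρ hm.le]
      exact Nat.find_min hex hm
    · exact iUnion_subset fun j => j.2.1

/-- Main decomposition lemma: every set in `Λ_η` is an open union of sets in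
`K_{θ_j}` for `1 ≤ θ_j ≤ η` (strictly below `η` when `η > 1`). -/
lemma lambda_decomp : ∀ η : Ordinal, ∀ T : Set (ℕ → C), T ∈ FineLambda C η →
    ∃ (J : Type) (T' O' : J → Set (ℕ → C)), (∀ j, IsOpen[seqTop C] (O' j)) ∧
      (Pairwise fun a b => Disjoint (O' a) (O' b)) ∧ (∀ j, T' j ⊆ O' j) ∧
      T = ⋃ j, T' j ∧
      ∀ j, ∃ θj : Ordinal, 1 ≤ θj ∧ θj ≤ η ∧ (1 < η → θj < η) ∧ T' j ∈ FineK C θj := by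
  intro η
  induction η using Ordinal.induction with
  | h η IH =>
  intro T hT
  rcases eq_or_ne η 1 with rfl | hne
  · have hU : IsOpen[seqTop C] T := by rwa [FineLambda_eq, if_pos rfl] at hT
    obtain ⟨J, T', O', h1, h2, h3, _, h5, h6⟩ := open_decomp hU
    exact ⟨J, T', O', h1, h2, h3, h5,
      fun j => ⟨1, le_refl _, le_refl _, fun h => absurd h (lt_irrefl 1), h6 j⟩⟩
  have hgt : 1 < η := lt_of_le_of_ne (one_le_of_memLambda hT) (Ne.symm hne)
  rw [FineLambda_eq, if_neg hne, if_pos hgt] at hT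
  obtain ⟨I, Ti, Oi, ηi, hO, hdisj, hsub, rfl, hmem⟩ := hT
  have key : ∀ i, ∃ (J : Type) (T' O' : J → Set (ℕ → C)),
      (∀ j, IsOpen[seqTop C] (O' j)) ∧ (Pairwise fun a b => Disjoint (O' a) (O' b)) ∧
      (∀ j, T' j ⊆ O' j) ∧ (∀ j, O' j ⊆ Oi i) ∧ Ti i = ⋃ j, T' j ∧
      ∀ j, ∃ θj : Ordinal, 1 ≤ θj ∧ θj < η ∧ T' j ∈ FineK C θj := by
    intro i
    rcases hmem i with h | h
    · obtain ⟨J, T', O', h1, h2, h3, h4, h5⟩ := IH (ηi i) (ηi i).2 _ h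
      refine ⟨J, T', fun j => O' j ∩ Oi i, fun j => ?_,
        fun a b hab => (h2 hab).mono inter_subset_left inter_subset_left,
        fun j => subset_inter (h3 j) ?_, fun j => inter_subset_right, h4, fun j => ?_⟩
      · rw [seqTop_eq] at h1 hO ⊢
        exact (h1 j).inter (hO i)
      · calc T' j ⊆ ⋃ j', T' j' := subset_iUnion _ j
          _ = Ti i := h4.symm
          _ ⊆ Oi i := hsub i
      · obtain ⟨θj, a, b, _, c⟩ := h5 j
        exact ⟨θj, a, lt_of_le_of_lt b (ηi i).2, c⟩
    · have h1 : (1 : Ordinal) ≤ ηi i := one_le_of_memLambda h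
      exact ⟨PUnit, fun _ => Ti i, fun _ => Oi i, fun _ => hO i, Subsingleton.pairwise,
        fun _ => hsub i, fun _ => subset_rfl, (iUnion_const _).symm,
        fun _ => ⟨ηi i, h1, (ηi i).2, h⟩⟩
  choose J T' O' h1 h2 h3 h4 h5 h6 using key
  refine ⟨Σ i, J i, fun p => T' p.1 p.2, fun p => O' p.1 p.2, fun p => h1 p.1 p.2, ?_,
    fun p => h3 p.1 p.2, ?_, fun p => ?_⟩
  · rintro ⟨i, j⟩ ⟨i', j'⟩ hne'
    rcases eq_or_ne i i' with rfl | hii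
    · have hjj : j ≠ j' := fun hjj => hne' (by rw [hjj])
      exact h2 i hjj
    · exact (hdisj hii).mono (h4 i j) (h4 i' j')
  · rw [iUnion_sigma]
    exact iUnion_congr h5
  · obtain ⟨θj, a, b, c⟩ := h6 p.1 p.2
    exact ⟨θj, a, b.le, fun _ => b, c⟩

end Aux

/-- For `θ > 1`, a set belongs to `Λ_θ` iff it is an open union of sets belonging to
`K_{θ_i}` for ordinals `1 ≤ θ_i < θ`. -/
theorem statement15 (C : Type) (θ : Ordinal) (hθ : 1 < θ) (S : Set (ℕ → C)) :
    S ∈ FineLambda C θ ↔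
      ∃ (I : Type) (T O : I → Set (ℕ → C)),
        (∀ i, IsOpen[seqTop C] (O i)) ∧ (Pairwise fun i j => Disjoint (O i) (O j)) ∧
        (∀ i, T i ⊆ O i) ∧ S = ⋃ i, T i ∧
        ∀ i, ∃ θi : Ordinal, 1 ≤ θi ∧ θi < θ ∧ T i ∈ FineK C θi := by
  constructor
  · intro hS
    obtain ⟨J, T', O', h1, h2, h3, h4, h5⟩ := lambda_decomp θ S hS
    exact ⟨J, T', O', h1, h2, h3, h4, fun j => by
      obtain ⟨θj, a, _, b, c⟩ := h5 j
      exact ⟨θj, a, b hθ, c⟩⟩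
  · rintro ⟨I, T, O, h1, h2, h3, h4, h5⟩
    rw [FineLambda_eq, if_neg (by rintro rfl; exact lt_irrefl 1 hθ), if_pos hθ]
    choose θi hθi1 hθi2 hθi3 using h5
    exact ⟨I, T, O, fun i => ⟨θi i, hθi2 i⟩, h1, h2, h3, h4, fun i => Or.inr (hθi3 i)⟩
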